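/- Let G be a connected graph with m ≥ 3 edges. Then ρ_e^o(G) = m − 1 if and only if G is obtained from the star K_{1,m−1} by subdividing exactly one of its edges once. -/

import Mathlib

/-- `e` is a common edge of `e₁` and `e₂` in `G`: `e` is an edge of `G` distinct from
`e₁, e₂` joining an endpoint of `e₁` to an endpoint of `e₂`. -/
def SimpleGraph.IsCommonEdge {V : Type*} (G : SimpleGraph V) (e e₁ e₂ : Sym2 V) : Prop :=
  e ∈ G.edgeSet ∧ e ≠ e₁ ∧ e ≠ e₂ ∧ ∃ a b, e = s(a, b) ∧ a ∈ e₁ ∧ b ∈ e₂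

/-- `D` is an edge open packing set of `G`. -/
def SimpleGraph.IsEOPSet {V : Type*} (G : SimpleGraph V) (D : Set (Sym2 V)) : Prop :=
  D ⊆ G.edgeSet ∧ ∀ e₁ ∈ D, ∀ e₂ ∈ D, e₁ ≠ e₂ → ∀ e, ¬ G.IsCommonEdge e e₁ e₂

/-- The edge open packing number `ρ_e^o(G)`. -/
noncomputable def SimpleGraph.eopNum {V : Type*} (G : SimpleGraph V) : ℕ :=
  sSup {n | ∃ D : Set (Sym2 V), G.IsEOPSet D ∧ D.ncard = n}

/-- `M` is an induced matching of `G`. -/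
def SimpleGraph.IsInducedMatching {V : Type*} (G : SimpleGraph V) (M : Set (Sym2 V)) : Prop :=
  M ⊆ G.edgeSet ∧ (∀ e₁ ∈ M, ∀ e₂ ∈ M, e₁ ≠ e₂ → ∀ v, ¬(v ∈ e₁ ∧ v ∈ e₂)) ∧
    (∀ e₁ ∈ M, ∀ e₂ ∈ M, e₁ ≠ e₂ → ∀ a b, a ∈ e₁ → b ∈ e₂ → ¬ G.Adj a b)

/-- The induced matching number of `G`. -/
noncomputable def SimpleGraph.imNum {V : Type*} (G : SimpleGraph V) : ℕ :=
  sSup {n | ∃ M : Set (Sym2 V), G.IsInducedMatching M ∧ M.ncard = n}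

namespace EOPaux
variable {V : Type*} {G : SimpleGraph V}

lemma sym2_rep (z : Sym2 V) : ∃ x y, z = s(x,y) :=
  Sym2.ind (fun x y => ⟨x, y, rfl⟩) z

lemma eop_violation {D : Set (Sym2 V)} (hD : G.IsEOPSet D) {e₁ e₂ : Sym2 V}
    (h₁ : e₁ ∈ D) (h₂ : e₂ ∈ D) (hne : e₁ ≠ e₂) {a b : V}
    (ha : a ∈ e₁) (hb : b ∈ e₂) (hadj : G.Adj a b)
    (hn1 : s(a,b) ≠ e₁) (hn2 : s(a,b) ≠ e₂) : False :=
  hD.2 e₁ h₁ e₂ h₂ hne s(a,b) ⟨G.mem_edgeSet.mpr hadj, hn1, hn2, a, b, rfl, ha, hb⟩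

lemma no_disjoint {D : Set (Sym2 V)} (hD : G.IsEOPSet D) (f : Sym2 V)
    (hDf : ∀ g ∈ G.edgeSet, g ∉ D → g = f) :
    ∀ k : ℕ, ∀ x b z d : V, ∀ W : G.Walk x z, W.length ≤ k →
      s(x,b) ∈ D → s(z,d) ∈ D → x ≠ z → x ≠ d → b ≠ z → b ≠ d → False := by
  intro k
  induction k using Nat.strong_induction_on with
  | _ k IH =>
    intro x b z d W hlen h1 h2 hxz hxd hbz hbd
    have hxb : x ≠ b := (G.mem_edgeSet.mp (hD.1 h1)).ne
    have hzd : z ≠ d := (G.mem_edgeSet.mp (hD.1 h2)).ne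
    cases W with
    | nil => exact hxz rfl
    | @cons _ v _ h W' =>
      have hadj : G.Adj x v := h
      have hlen' : W'.length < k := by
        rw [SimpleGraph.Walk.length_cons] at hlen; omega
      have hxv : x ≠ v := hadj.ne
      by_cases hvzd : v = z ∨ v = d
      · refine eop_violation hD h1 h2 ?_ (Sym2.mem_mk_left x b) (Sym2.mem_iff.mpr hvzd) hadj ?_ ?_
        · intro he
          rcases Sym2.eq_iff.mp he with ⟨h', _⟩ | ⟨h', _⟩
          · exact hxz h'
          · exact hxd h'
        · intro he
          rcases Sym2.eq_iff.mp he with ⟨_, h'⟩ | ⟨h', _⟩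
          · rcases hvzd with h'' | h'' <;> [exact hbz (h' ▸ h''); exact hbd (h' ▸ h'')]
          · exact hxb h'
        · intro he
          rcases Sym2.eq_iff.mp he with ⟨h', _⟩ | ⟨h', _⟩
          · exact hxz h'
          · exact hxd h'
      · push_neg at hvzd
        obtain ⟨hvz, hvd⟩ := hvzd
        by_cases hvb : v = b
        · subst hvb
          exact IH W'.length hlen' v x z d W' le_rfl (by rwa [Sym2.eq_swap]) h2 hbz hbd hxz hxd
        · by_cases hin : s(x,v) ∈ D
          · exact IH W'.length hlen' v x z d W' le_rfl (by rwa [Sym2.eq_swap]) h2 hvz hvd hxz hxd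
          · have hf : s(x,v) = f := hDf _ (G.mem_edgeSet.mpr hadj) hin
            cases W' with
            | nil => exact hvz rfl
            | @cons _ v₂ _ h₂ W'' =>
              have hlen'' : W''.length < k := by
                rw [SimpleGraph.Walk.length_cons] at hlen'; omega
              by_cases hv2 : v₂ = x
              · subst hv2
                exact IH W''.length hlen'' v₂ b z d W'' le_rfl h1 h2 hxz hxd hbz hbd
              · have hg2 : s(v, v₂) ∈ D := by
                  by_contra hg
                  have h' := hDf _ (G.mem_edgeSet.mpr h₂) hg
                  rw [← hf] at h'
                  rcases Sym2.eq_iff.mp h' with ⟨h1', _⟩ | ⟨_, h2'⟩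
                  · exact hxv h1'.symm
                  · exact hv2 h2'
                refine eop_violation hD h1 hg2 ?_ (Sym2.mem_mk_left x b) (Sym2.mem_mk_left v v₂) hadj ?_ ?_
                · intro he
                  rcases Sym2.eq_iff.mp he with ⟨h', _⟩ | ⟨h', _⟩
                  · exact hxv h'
                  · exact hv2 h'.symm
                · intro he
                  rcases Sym2.eq_iff.mp he with ⟨_, h'⟩ | ⟨h', _⟩
                  · exact hvb h'
                  · exact hxb h'
                · intro he
                  rcases Sym2.eq_iff.mp he with ⟨h', _⟩ | ⟨h', _⟩
                  · exact hxv h'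
                  · exact hv2 h'.symm

lemma f_endpoint {D : Set (Sym2 V)} (f : Sym2 V)
    (hDf : ∀ g ∈ G.edgeSet, g ∉ D → g = f) (c : V) :
    ∀ k : ℕ, ∀ p q : V, ∀ W : G.Walk p c, W.length ≤ k → s(p,q) = f →
      G.Adj p q → p ≠ c → q ≠ c →
      (∃ e ∈ D, p ∈ e) ∨ (∃ e ∈ D, q ∈ e) := by
  intro k
  induction k using Nat.strong_induction_on with
  | _ k IH =>
    intro p q W hlen hf hpq hpc hqc
    cases W with
    | nil => exact absurd rfl hpc
    | @cons _ v _ h W' =>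
      have hlen' : W'.length < k := by
        rw [SimpleGraph.Walk.length_cons] at hlen; omega
      by_cases hg : s(p,v) ∈ D
      · exact Or.inl ⟨_, hg, Sym2.mem_mk_left p v⟩
      · have hgf : s(p,v) = f := hDf _ (G.mem_edgeSet.mpr h) hg
        rw [← hf] at hgf
        have hvq : v = q := by
          rcases Sym2.eq_iff.mp hgf with ⟨_, h2⟩ | ⟨h1, _⟩
          · exact h2
          · exact absurd h1 hpq.ne
        subst hvq
        exact (IH W'.length hlen' v p W' le_rfl (by rwa [Sym2.eq_swap]) hpq.symm hqc hpc).symm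

end EOPaux

open EOPaux in
theorem stmt6 {V : Type*} [Fintype V] (G : SimpleGraph V) (hG : G.Connected)
    (m : ℕ) (hm : G.edgeSet.ncard = m) (h3 : 3 ≤ m) :
    G.eopNum = m - 1 ↔
      ∃ c w u : V, c ≠ w ∧ w ≠ u ∧ c ≠ u ∧ G.Adj c w ∧ G.Adj w u ∧ ¬ G.Adj c u ∧
        ∀ e ∈ G.edgeSet, e ≠ s(w, u) → c ∈ e := by
  classical
  have hfin : G.edgeSet.Finite := Set.toFinite _
  set S := {n | ∃ D : Set (Sym2 V), G.IsEOPSet D ∧ D.ncard = n} with hSdef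
  have hSne : S.Nonempty :=
    ⟨0, ∅, ⟨Set.empty_subset _, fun e₁ h => absurd h (Set.notMem_empty e₁)⟩, Set.ncard_empty _⟩
  have hub : ∀ n ∈ S, n ≤ m := by
    rintro n ⟨D, hD, rfl⟩
    rw [← hm]
    exact Set.ncard_le_ncard hD.1 hfin
  have hbdd : BddAbove S := ⟨m, hub⟩
  have heop : G.eopNum = sSup S := rfl
  constructor
  · intro heq
    have hmem : m - 1 ∈ S := by
      have h' := Nat.sSup_mem hSne hbdd
      rwa [← heop, heq] at h'
    obtain ⟨D, hD, hcard⟩ := hmem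
    have hDfin : D.Finite := hfin.subset hD.1
    have hnotfull : ¬ G.IsEOPSet G.edgeSet := by
      intro hfull
      have h1 : m ∈ S := ⟨G.edgeSet, hfull, hm⟩
      have h2 := le_csSup hbdd h1
      rw [← heop, heq] at h2
      omega
    have hdcard : (G.edgeSet \ D).ncard = 1 := by
      rw [Set.ncard_diff hD.1 hDfin, hm, hcard]; omega
    obtain ⟨f, hfeq⟩ := Set.ncard_eq_one.mp hdcard
    have hfE : f ∈ G.edgeSet := by
      have : f ∈ G.edgeSet \ D := by rw [hfeq]; exact rfl
      exact this.1
    have hDf : ∀ g ∈ G.edgeSet, g ∉ D → g = f := by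
      intro g hg hgD
      have : g ∈ G.edgeSet \ D := ⟨hg, hgD⟩
      rwa [hfeq] at this
    have hshared : ∀ x b z d : V, s(x,b) ∈ D → s(z,d) ∈ D → s(x,b) ≠ s(z,d) →
        x = z ∨ x = d ∨ b = z ∨ b = d := by
      intro x b z d h1 h2 hne
      by_contra hc
      push_neg at hc
      obtain ⟨W⟩ := hG.preconnected x z
      exact no_disjoint hD f hDf W.length x b z d W le_rfl h1 h2 hc.1 hc.2.1 hc.2.2.1 hc.2.2.2
    -- find two distinct edges in D
    have h2card : 1 < D.ncard := by omega
    obtain ⟨e₁, e₂, he₁, he₂, hne12⟩ := (Set.one_lt_ncard_iff hDfin).mp h2card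
    obtain ⟨x, b, rfl⟩ := sym2_rep e₁
    obtain ⟨z, d, rfl⟩ := sym2_rep e₂
    -- common vertex of first two edges
    have hstar0 : ∃ c a₁ a₂ : V, a₁ ≠ a₂ ∧ s(c,a₁) ∈ D ∧ s(c,a₂) ∈ D := by
      rcases hshared x b z d he₁ he₂ hne12 with h | h | h | h
      · subst h
        exact ⟨x, b, d, fun hbd => hne12 (by rw [hbd]), he₁, he₂⟩
      · subst h
        refine ⟨x, b, z, fun hbz' => hne12 (by rw [hbz', Sym2.eq_swap]), he₁, by rwa [Sym2.eq_swap]⟩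
      · subst h
        refine ⟨b, x, d, fun hxd => hne12 (by rw [hxd, Sym2.eq_swap]), by rwa [Sym2.eq_swap], he₂⟩
      · subst h
        refine ⟨b, x, z, ?_, by rwa [Sym2.eq_swap], by rwa [Sym2.eq_swap]⟩
        intro hxz
        exact hne12 (by rw [hxz, Sym2.eq_swap])
    obtain ⟨c, a₁, a₂, ha12, hd1, hd2⟩ := hstar0
    have hca₁ : G.Adj c a₁ := G.mem_edgeSet.mp (hD.1 hd1)
    have hca₂ : G.Adj c a₂ := G.mem_edgeSet.mp (hD.1 hd2)
    have hne' : s(c,a₁) ≠ s(c,a₂) := by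
      intro he
      rcases Sym2.eq_iff.mp he with ⟨_, h'⟩ | ⟨h', _⟩
      · exact ha12 h'
      · exact hca₂.ne h'
    -- every edge of D contains c
    have hallc : ∀ e ∈ D, c ∈ e := by
      intro e he
      by_contra hce
      obtain ⟨p, q, rfl⟩ := sym2_rep e
      have hnc : ∀ y : V, y ∈ s(p,q) → y ≠ c := by
        intro y hy hyc
        exact hce (hyc ▸ hy)
      have hm1 : a₁ ∈ s(p,q) := by
        have hne1 : s(p,q) ≠ s(c,a₁) := by
          intro h'
          exact hce (h' ▸ Sym2.mem_mk_left c a₁)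
        rcases hshared p q c a₁ he hd1 hne1 with h | h | h | h
        · exact absurd h (hnc p (Sym2.mem_mk_left p q))
        · exact h ▸ Sym2.mem_mk_left p q
        · exact absurd h (hnc q (Sym2.mem_mk_right p q))
        · exact h ▸ Sym2.mem_mk_right p q
      have hm2 : a₂ ∈ s(p,q) := by
        have hne2 : s(p,q) ≠ s(c,a₂) := by
          intro h'
          exact hce (h' ▸ Sym2.mem_mk_left c a₂)
        rcases hshared p q c a₂ he hd2 hne2 with h | h | h | h
        · exact absurd h (hnc p (Sym2.mem_mk_left p q))
        · exact h ▸ Sym2.mem_mk_left p q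
        · exact absurd h (hnc q (Sym2.mem_mk_right p q))
        · exact h ▸ Sym2.mem_mk_right p q
      have heq : s(p,q) = s(a₁,a₂) := (Sym2.mem_and_mem_iff ha12).mp ⟨hm1, hm2⟩
      have hadj : G.Adj a₁ a₂ := G.mem_edgeSet.mp (heq ▸ hD.1 he)
      refine eop_violation hD hd1 hd2 hne' (Sym2.mem_mk_right c a₁) (Sym2.mem_mk_right c a₂) hadj ?_ ?_
      · intro h'
        rcases Sym2.eq_iff.mp h' with ⟨h'', _⟩ | ⟨_, h''⟩
        · exact hca₁.ne h''.symm
        · exact hca₂.ne h''.symm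
      · intro h'
        rcases Sym2.eq_iff.mp h' with ⟨h'', _⟩ | ⟨h'', _⟩
        · exact hca₁.ne h''.symm
        · exact ha12 h''
    by_cases hcf : c ∈ f
    · exfalso
      apply hnotfull
      have hall : ∀ e ∈ G.edgeSet, c ∈ e := by
        intro e he
        by_cases heD : e ∈ D
        · exact hallc e heD
        · rw [hDf e he heD]; exact hcf
      refine ⟨subset_rfl, ?_⟩
      intro e₁ h1 e₂ h2 hne e hce
      obtain ⟨heE, hn1, hn2, a, b', heqe, ha, hb⟩ := hce
      subst heqe
      obtain ⟨y₁, hy₁⟩ := Sym2.mem_iff_exists.mp (hall e₁ h1)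
      obtain ⟨y₂, hy₂⟩ := Sym2.mem_iff_exists.mp (hall e₂ h2)
      subst hy₁; subst hy₂
      have hAab : G.Adj a b' := G.mem_edgeSet.mp heE
      rcases Sym2.mem_iff.mp (hall _ heE) with hca | hcb
      · rcases Sym2.mem_iff.mp hb with hbc | hby
        · exact hAab.ne (hca.symm.trans hbc.symm)
        · exact hn2 (by rw [← hca, hby])
      · rcases Sym2.mem_iff.mp ha with hac | hay
        · exact hAab.ne (hac.trans hcb)
        · exact hn1 (by rw [hay, ← hcb, Sym2.eq_swap])
    · -- c ∉ f
      obtain ⟨w', u', rfl⟩ := sym2_rep f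
      have hadjwu : G.Adj w' u' := G.mem_edgeSet.mp hfE
      have hcw' : c ≠ w' := fun h => hcf (h ▸ Sym2.mem_mk_left w' u')
      have hcu' : c ≠ u' := fun h => hcf (h ▸ Sym2.mem_mk_right w' u')
      have hnotboth : ¬ ((∃ e ∈ D, w' ∈ e) ∧ (∃ e ∈ D, u' ∈ e)) := by
        rintro ⟨⟨e, heD, hwe⟩, ⟨e', he'D, hue⟩⟩
        have he : e = s(c, w') := (Sym2.mem_and_mem_iff hcw').mp ⟨hallc e heD, hwe⟩
        have he' : e' = s(c, u') := (Sym2.mem_and_mem_iff hcu').mp ⟨hallc e' he'D, hue⟩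
        subst he; subst he'
        refine eop_violation hD heD he'D ?_ (Sym2.mem_mk_right c w') (Sym2.mem_mk_right c u')
          hadjwu ?_ ?_
        · intro h'
          rcases Sym2.eq_iff.mp h' with ⟨_, h''⟩ | ⟨h'', _⟩
          · exact hadjwu.ne h''
          · exact hcu' h''
        · intro h'
          rcases Sym2.eq_iff.mp h' with ⟨h'', _⟩ | ⟨_, h''⟩
          · exact hcw' h''.symm
          · exact hcu' h''.symm
        · intro h'
          rcases Sym2.eq_iff.mp h' with ⟨h'', _⟩ | ⟨h'', _⟩
          · exact hcw' h''.symm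
          · exact hadjwu.ne h''
      have key : ∀ w u : V, G.Adj w u → s(w,u) = s(w',u') → c ≠ w → c ≠ u →
          (∃ e ∈ D, w ∈ e) →
          ∃ c' w'' u'' : V, c' ≠ w'' ∧ w'' ≠ u'' ∧ c' ≠ u'' ∧ G.Adj c' w'' ∧ G.Adj w'' u'' ∧
            ¬ G.Adj c' u'' ∧ ∀ e ∈ G.edgeSet, e ≠ s(w'', u'') → c' ∈ e := by
        intro w u hwu hfwu hcw hcu hwD
        obtain ⟨e, heD, hwe⟩ := hwD
        have he : e = s(c, w) := (Sym2.mem_and_mem_iff hcw).mp ⟨hallc e heD, hwe⟩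
        have hacw : G.Adj c w := G.mem_edgeSet.mp (he ▸ hD.1 heD)
        have hnacu : ¬ G.Adj c u := by
          intro hacu
          have hne : s(c,u) ≠ s(w',u') := by
            intro h'
            have : c ∈ s(w', u') := h' ▸ Sym2.mem_mk_left c u
            exact hcf this
          have hDcu : s(c,u) ∈ D := by
            by_contra h'
            exact hne (hDf _ (G.mem_edgeSet.mpr hacu) h')
          have huD : ∃ e ∈ D, u ∈ e := ⟨s(c,u), hDcu, Sym2.mem_mk_right c u⟩
          have hwD' : ∃ e ∈ D, w ∈ e := ⟨e, heD, hwe⟩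
          rcases Sym2.eq_iff.mp hfwu with ⟨hw, hu⟩ | ⟨hw, hu⟩
          · exact hnotboth ⟨hw ▸ hwD', hu ▸ huD⟩
          · exact hnotboth ⟨hu ▸ huD, hw ▸ hwD'⟩
        refine ⟨c, w, u, hcw, hwu.ne, hcu, hacw, hwu, hnacu, ?_⟩
        intro e' he'E hne'
        by_cases he'D : e' ∈ D
        · exact hallc e' he'D
        · exact absurd ((hDf e' he'E he'D).trans hfwu.symm) hne'
      obtain ⟨W⟩ := hG.preconnected w' c
      rcases f_endpoint s(w',u') hDf c W.length w' u' W le_rfl rfl hadjwu hcw'.symm hcu'.symm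
        with h | h
      · exact key w' u' hadjwu rfl hcw' hcu' h
      · exact key u' w' hadjwu.symm Sym2.eq_swap hcu' hcw' h
  · rintro ⟨c, w, u, hcw, hwu, hcu, hacw, hawu, hnacu, hstar⟩
    set D := G.edgeSet \ {s(w,u)} with hDdef
    have hwuE : s(w,u) ∈ G.edgeSet := hawu
    have hDcard : D.ncard = m - 1 := by
      rw [hDdef, Set.ncard_diff_singleton_of_mem hwuE, hm]
    have hDeop : G.IsEOPSet D := by
      refine ⟨fun e he => he.1, ?_⟩
      intro e₁ h1 e₂ h2 hne e hce
      obtain ⟨heE, hn1, hn2, a, b, heqe, ha, hb⟩ := hce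
      subst heqe
      have hc1 : c ∈ e₁ := hstar e₁ h1.1 (fun h => h1.2 (by rw [h]; exact rfl))
      have hc2 : c ∈ e₂ := hstar e₂ h2.1 (fun h => h2.2 (by rw [h]; exact rfl))
      obtain ⟨y₁, hy₁⟩ := Sym2.mem_iff_exists.mp hc1
      obtain ⟨y₂, hy₂⟩ := Sym2.mem_iff_exists.mp hc2
      have hA1 : G.Adj c y₁ := G.mem_edgeSet.mp (hy₁ ▸ h1.1)
      have hA2 : G.Adj c y₂ := G.mem_edgeSet.mp (hy₂ ▸ h2.1)
      have hAab : G.Adj a b := G.mem_edgeSet.mp heE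
      subst hy₁; subst hy₂
      rcases Sym2.mem_iff.mp ha with hac | hay
      · -- a = c
        rcases Sym2.mem_iff.mp hb with hbc | hby
        · exact hAab.ne (hac.trans hbc.symm)
        · exact hn2 (by rw [hac, hby])
      · rcases Sym2.mem_iff.mp hb with hbc | hby
        · exact hn1 (by rw [hay, hbc, Sym2.eq_swap])
        · -- a = y₁, b = y₂ : edge between leaves, must be s(w,u)
          subst hay; subst hby
          have hef : s(a,b) = s(w,u) := by
            by_contra h'
            have hcab : c ∈ s(a,b) := hstar _ heE h'
            rcases Sym2.mem_iff.mp hcab with h'' | h''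
            · exact hA1.ne h''
            · exact hA2.ne h''
          rcases Sym2.eq_iff.mp hef with ⟨haw, hbu⟩ | ⟨hau, hbw⟩
          · exact hnacu (hbu ▸ hA2)
          · exact hnacu (hau ▸ hA1)
    have hm1S : m - 1 ∈ S := ⟨D, hDeop, hDcard⟩
    have hub' : ∀ n ∈ S, n ≤ m - 1 := by
      rintro n ⟨D', hD', rfl⟩
      by_contra hgt
      push_neg at hgt
      have hle : D'.ncard ≤ m := hub _ ⟨D', hD', rfl⟩
      have hDm : m ≤ D'.ncard := by omega
      have hDeq : D' = G.edgeSet := Set.eq_of_subset_of_ncard_le hD'.1 (by omega) hfin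
      subst hDeq
      -- a third edge exists
      have hthird : ∃ g ∈ G.edgeSet, g ≠ s(c,w) ∧ g ≠ s(w,u) := by
        by_contra hno
        push_neg at hno
        have hsub : G.edgeSet ⊆ {s(c,w), s(w,u)} := by
          intro g hg
          by_cases h' : g = s(c,w)
          · exact Or.inl h'
          · exact Or.inr (hno g hg h')
        have : G.edgeSet.ncard ≤ 2 := by
          calc G.edgeSet.ncard ≤ ({s(c,w), s(w,u)} : Set (Sym2 V)).ncard :=
                Set.ncard_le_ncard hsub (Set.toFinite _)
            _ ≤ 2 := by
                by_cases h' : s(c,w) = s(w,u)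
                · rw [h']; simp
                · rw [Set.ncard_pair h']
        omega
      obtain ⟨g, hgE, hg1, hg2⟩ := hthird
      have hcg : c ∈ g := hstar g hgE hg2
      obtain ⟨a, hga⟩ := Sym2.mem_iff_exists.mp hcg
      subst hga
      have hca : G.Adj c a := G.mem_edgeSet.mp hgE
      refine eop_violation hD' hgE hwuE hg2 (Sym2.mem_mk_left c a) (Sym2.mem_mk_left w u)
        hacw ?_ ?_
      · intro h'
        rcases Sym2.eq_iff.mp h' with ⟨_, h''⟩ | ⟨h'', _⟩
        · exact hg1 (by rw [h''])
        · exact hca.ne h''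
      · intro h'
        rcases Sym2.eq_iff.mp h' with ⟨h'', _⟩ | ⟨h'', _⟩
        · exact hcw h''
        · exact hcu h''
    rw [heop]
    exact le_antisymm (csSup_le hSne hub') (le_csSup hbdd hm1S)
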